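/- Let K be a symmetric positive definite p×p matrix with inverse Σ, and let A* = argmin over p×p matrices A with zero diagonal of ‖Σ^{1/2}(I - A)‖_F². Then A* = KΔ + I, where Δ is the diagonal matrix with entries Δ_{jj} = -1/K_{jj}. -/

import Mathlib

open Matrix

/-- The minimizer over zero-diagonal matrices `A` of
`‖Sig^{1/2}(I − A)‖_F²` is `Θ = KΔ + I` with `K = Sig⁻¹` and `Δ_{jj} = −1/K_{jj}`:
`Θ` has zero diagonal, is a minimizer, and is the unique one. -/
theorem regression_argmin (p : ℕ) (Sig : Matrix (Fin p) (Fin p) ℝ) (hSig : Sig.PosDef)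
    (K : Matrix (Fin p) (Fin p) ℝ) (hK : K = Sig⁻¹)
    (Δ : Matrix (Fin p) (Fin p) ℝ) (hΔ : Δ = diagonal (fun j => -1 / K j j))
    (Θ : Matrix (Fin p) (Fin p) ℝ) (hΘ : Θ = K * Δ + 1)
    (sqrtSig : Matrix (Fin p) (Fin p) ℝ) (hsqrt : sqrtSig = (hSig.posSemidef.1.eigenvectorUnitary : Matrix (Fin p) (Fin p) ℝ) *
      diagonal ((RCLike.ofReal : ℝ → ℝ) ∘ Real.sqrt ∘ hSig.posSemidef.1.eigenvalues) *
      (star hSig.posSemidef.1.eigenvectorUnitary : Matrix (Fin p) (Fin p) ℝ))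
    (f : Matrix (Fin p) (Fin p) ℝ → ℝ)
    (hf : f = fun A => ∑ i, ∑ j, (sqrtSig * (1 - A)) i j ^ 2) :
    (∀ j, Θ j j = 0) ∧
    (∀ A : Matrix (Fin p) (Fin p) ℝ, (∀ j, A j j = 0) → f Θ ≤ f A) ∧
    (∀ A : Matrix (Fin p) (Fin p) ℝ, (∀ j, A j j = 0) → f A = f Θ → A = Θ) := by
  have hdet : IsUnit Sig.det := hSig.det_pos.ne'.isUnit
  have hSigK : Sig * K = 1 := by rw [hK]; exact Matrix.mul_nonsing_inv _ hdet
  have hKSig : K * Sig = 1 := by rw [hK]; exact Matrix.nonsing_inv_mul _ hdet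
  have hKpd : K.PosDef := hK ▸ hSig.inv
  have hKjj : ∀ j, 0 < K j j := by
    intro j
    exact hKpd.diag_pos
  have hΘdiag : ∀ j, Θ j j = 0 := by
    intro j
    rw [hΘ, hΔ]
    have : (K * diagonal (fun j => -1 / K j j)) j j = K j j * (-1 / K j j) :=
      Matrix.mul_diagonal _ _ _ _
    rw [Matrix.add_apply, this, Matrix.one_apply_eq]
    have hne : K j j ≠ 0 := (hKjj j).ne'
    field_simp
    norm_num
  have gtr : ∀ M : Matrix (Fin p) (Fin p) ℝ, ∑ i, ∑ j, M i j ^ 2 = trace (Mᵀ * M) := by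
    intro M
    simp [trace, Matrix.mul_apply, diag, sq]
    rw [Finset.sum_comm]
  have hS2 : sqrtSig * sqrtSig = Sig := by
    rw [hsqrt]
    conv_rhs => rw [hSig.posSemidef.1.spectral_theorem, Unitary.conjStarAlgAut_apply]
    have hu : (star hSig.posSemidef.1.eigenvectorUnitary : Matrix (Fin p) (Fin p) ℝ) *
        (hSig.posSemidef.1.eigenvectorUnitary : Matrix (Fin p) (Fin p) ℝ) = 1 :=
      Unitary.star_mul_self_of_mem hSig.posSemidef.1.eigenvectorUnitary.2
    simp only [Matrix.mul_assoc]
    rw [← Matrix.mul_assoc _ _ (diagonal _ * _), hu, Matrix.one_mul, ← Matrix.mul_assoc (diagonal _),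
      diagonal_mul_diagonal]
    congr 3
    funext i
    simp [Real.mul_self_sqrt (hSig.posSemidef.eigenvalues_nonneg i)]
  have hSsym : sqrtSigᵀ = sqrtSig := by
    rw [hsqrt]
    simp [Matrix.mul_assoc, transpose_mul, Matrix.star_eq_conjTranspose, conjTranspose_eq_transpose_of_trivial]
  have hSigsym : Sigᵀ = Sig := by simpa [Matrix.IsSymm] using hSig.1
  have hfA : ∀ A, f A = trace ((1 - A)ᵀ * Sig * (1 - A)) := by
    intro A
    rw [hf]
    dsimp only
    rw [gtr]
    congr 1
    rw [transpose_mul, hSsym, Matrix.mul_assoc, ← Matrix.mul_assoc sqrtSig, hS2,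
      ← Matrix.mul_assoc]
  have hkey : Sig * (1 - Θ) = -Δ := by
    rw [hΘ, Matrix.mul_sub, Matrix.mul_one, Matrix.mul_add, Matrix.mul_one,
      ← Matrix.mul_assoc, hSigK, Matrix.one_mul]
    abel
  -- nonnegativity / definiteness of the quadratic form
  have hquad : ∀ B : Matrix (Fin p) (Fin p) ℝ,
      Bᵀ * Sig * B = (sqrtSig * B)ᵀ * (sqrtSig * B) := by
    intro B
    rw [transpose_mul, hSsym, ← Matrix.mul_assoc, Matrix.mul_assoc Bᵀ sqrtSig sqrtSig, hS2]
  have hnn : ∀ B : Matrix (Fin p) (Fin p) ℝ, 0 ≤ trace (Bᵀ * Sig * B) := by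
    intro B
    rw [hquad, ← gtr]
    exact Finset.sum_nonneg fun i _ => Finset.sum_nonneg fun j _ => sq_nonneg _
  have hzero : ∀ B : Matrix (Fin p) (Fin p) ℝ, trace (Bᵀ * Sig * B) = 0 → B = 0 := by
    intro B h0
    rw [hquad, ← gtr] at h0
    have hrow := (Finset.sum_eq_zero_iff_of_nonneg
      (fun i _ => Finset.sum_nonneg fun j _ => sq_nonneg ((sqrtSig * B) i j))).1 h0
    have hz : ∀ i j, (sqrtSig * B) i j = 0 := by
      intro i j
      have := (Finset.sum_eq_zero_iff_of_nonneg
        (fun j _ => sq_nonneg ((sqrtSig * B) i j))).1 (hrow i (Finset.mem_univ i)) j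
        (Finset.mem_univ j)
      exact pow_eq_zero_iff two_ne_zero |>.1 this
    have hSB : sqrtSig * B = 0 := by ext i j; simpa using hz i j
    have hSigB : Sig * B = 0 := by
      rw [← hS2, Matrix.mul_assoc, hSB, Matrix.mul_zero]
    calc B = (K * Sig) * B := by rw [hKSig, Matrix.one_mul]
      _ = K * (Sig * B) := Matrix.mul_assoc _ _ _
      _ = 0 := by rw [hSigB, Matrix.mul_zero]
  -- the expansion
  have expand : ∀ A : Matrix (Fin p) (Fin p) ℝ, (∀ j, A j j = 0) →
      f A = f Θ + trace ((A - Θ)ᵀ * Sig * (A - Θ)) := by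
    intro A hA
    have hD : ∀ j, (A - Θ) j j = 0 := fun j => by
      simp [Matrix.sub_apply, hA j, hΘdiag j]
    set D := A - Θ with hDdef
    have h1A : (1 : Matrix (Fin p) (Fin p) ℝ) - A = (1 - Θ) - D := by
      rw [hDdef]; abel
    have cross : trace ((1 - Θ)ᵀ * Sig * D) = 0 := by
      have h1 : (1 - Θ)ᵀ * Sig = (Sig * (1 - Θ))ᵀ := by rw [transpose_mul, hSigsym]
      rw [h1, hkey]
      simp [hΔ, trace, diag, Matrix.diagonal_mul, hD]
    have cross2 : trace (Dᵀ * Sig * (1 - Θ)) = 0 := by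
      rw [← Matrix.trace_transpose]
      have h2 : (Dᵀ * Sig * (1 - Θ))ᵀ = (1 - Θ)ᵀ * Sig * D := by
        rw [transpose_mul, transpose_mul, transpose_transpose, hSigsym, Matrix.mul_assoc]
      rw [h2, cross]
    have expmat : ((1 - Θ) - D)ᵀ * Sig * ((1 - Θ) - D)
        = (1 - Θ)ᵀ * Sig * (1 - Θ) - (1 - Θ)ᵀ * Sig * D - Dᵀ * Sig * (1 - Θ)
          + Dᵀ * Sig * D := by
      rw [transpose_sub]; noncomm_ring
    rw [hfA, hfA, h1A, expmat, trace_add, trace_sub, trace_sub, cross, cross2]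
    ring
  refine ⟨hΘdiag, ?_, ?_⟩
  · intro A hA
    have := hnn (A - Θ)
    rw [expand A hA]
    linarith
  · intro A hA heq
    rw [expand A hA] at heq
    have h0 : trace ((A - Θ)ᵀ * Sig * (A - Θ)) = 0 := by linarith
    have := hzero _ h0
    exact sub_eq_zero.1 this
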